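/- Let A ∈ ℝ^{n×n} be invertible, W ∈ ℝ^{n×n} symmetric positive definite, and let S_1, …, S_r with S_i ∈ ℝ^{n×q_i} be a complete discrete sampling with probabilities p_i = ‖W^{1/2} A^T S_i‖_F² / ‖W^{1/2} A^T 𝐒‖_F², where 𝐒 = [S_1, …, S_r]. Set Z_i := A^T S_i (S_i^T A W A^T S_i)^{-1} S_i^T A and ρ := 1 − λ_min(W^{1/2} (Σ_{i=1}^r p_i Z_i) W^{1/2}). Then ρ ≤ 1 − λ_min(𝐒^T A W A^T 𝐒)/Tr(𝐒^T A W A^T 𝐒) = 1 − 1/κ_{2,F}²(W^{1/2} A^T 𝐒), and moreover κ_{2,F}(W^{1/2} A^T 𝐒) ≥ √n, i.e. Tr(𝐒^T A W A^T 𝐒) ≥ n·λ_min(𝐒^T A W A^T 𝐒). -/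

import Mathlib

set_option linter.unusedSectionVars false
set_option linter.unusedVariables false
set_option maxHeartbeats 1000000

open Matrix BigOperators

section Aux
variable {m k : Type*} [Fintype m] [Fintype k]

lemma aux_sum_mulVec {ι : Type*} (s : Finset ι) (M : ι → Matrix m k ℝ) (v : k → ℝ) :
    (∑ i ∈ s, M i) *ᵥ v = ∑ i ∈ s, (M i) *ᵥ v := by
  ext x
  simp [Matrix.mulVec, dotProduct, Matrix.sum_apply, Finset.sum_mul, Finset.sum_apply]
  rw [Finset.sum_comm]

lemma aux_dotProduct_sum {ι : Type*} (s : Finset ι) (v : k → ℝ) (w : ι → (k → ℝ)) :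
    v ⬝ᵥ (∑ i ∈ s, w i) = ∑ i ∈ s, v ⬝ᵥ w i := by
  simp only [dotProduct, Finset.sum_apply, Finset.mul_sum]
  rw [Finset.sum_comm]

-- Cauchy–Schwarz / operator-Frobenius bound
lemma aux_frob_bound (C : Matrix m k ℝ) (v : k → ℝ) :
    (C *ᵥ v) ⬝ᵥ (C *ᵥ v) ≤ (∑ x, ∑ y, (C x y) ^ 2) * (v ⬝ᵥ v) := by
  have hvv : v ⬝ᵥ v = ∑ y, (v y) ^ 2 := by
    simp [dotProduct, pow_two]
  rw [dotProduct, hvv, Finset.sum_mul]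
  apply Finset.sum_le_sum
  intro x _
  have h := Finset.sum_mul_sq_le_sq_mul_sq Finset.univ (fun y => C x y) v
  simpa [Matrix.mulVec, dotProduct, pow_two] using h

lemma aux_mulVec_inj_of_rank {M : Matrix m k ℝ} (h : M.rank = Fintype.card k)
    (x : k → ℝ) (hx : M *ᵥ x = 0) : x = 0 := by
  have hk : LinearMap.ker M.mulVecLin = ⊥ := by
    have h1 := LinearMap.finrank_range_add_finrank_ker M.mulVecLin
    have h2 : Module.finrank ℝ (k → ℝ) = Fintype.card k := Module.finrank_pi ℝ
    rw [h2] at h1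
    have : Module.finrank ℝ (LinearMap.ker M.mulVecLin) = 0 := by
      have : M.rank = Module.finrank ℝ (LinearMap.range M.mulVecLin) := rfl
      omega
    exact Submodule.finrank_eq_zero.mp this
  have : x ∈ LinearMap.ker M.mulVecLin := by
    simpa [Matrix.mulVecLin] using hx
  rwa [hk, Submodule.mem_bot] at this

end Aux

section Spec
variable {k : Type*} [Fintype k] [DecidableEq k]

lemma aux_dot_self_nonneg (v : k → ℝ) : 0 ≤ v ⬝ᵥ v :=
  Finset.sum_nonneg fun i _ => mul_self_nonneg (v i)

lemma aux_dot_self_pos {v : k → ℝ} (hv : v ≠ 0) : 0 < v ⬝ᵥ v := by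
  rcases lt_or_eq_of_le (aux_dot_self_nonneg v) with h | h
  · exact h
  · exact absurd (dotProduct_self_eq_zero.mp h.symm) hv

lemma aux_quad_lower {H : Matrix k k ℝ} (hH : H.IsHermitian) {c : ℝ}
    (hc : ∀ j, c ≤ hH.eigenvalues j) (v : k → ℝ) :
    c * (v ⬝ᵥ v) ≤ v ⬝ᵥ (H *ᵥ v) := by
  classical
  set U : Matrix k k ℝ := (hH.eigenvectorUnitary : Matrix k k ℝ) with hU
  have hstar : star U = Uᵀ := by
    rw [Matrix.star_eq_conjTranspose, Matrix.conjTranspose_eq_transpose_of_trivial]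
  have hUU : U * Uᵀ = 1 := by
    rw [← hstar]; exact Matrix.mem_unitaryGroup_iff.mp hH.eigenvectorUnitary.2
  have hsp : H = U * Matrix.diagonal hH.eigenvalues * Uᵀ := by
    rw [← hstar]
    have := hH.spectral_theorem
    simpa using this
  set w : k → ℝ := Uᵀ *ᵥ v with hw
  have hback : ∀ z : k → ℝ, (w ⬝ᵥ z) = v ⬝ᵥ (U *ᵥ z) := by
    intro z
    rw [hw, Matrix.mulVec_transpose, ← Matrix.dotProduct_mulVec]
  have hvv : v ⬝ᵥ v = w ⬝ᵥ w := by
    rw [hback w, hw, Matrix.mulVec_mulVec, hUU, Matrix.one_mulVec]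
  have hqv : v ⬝ᵥ (H *ᵥ v) = ∑ j, hH.eigenvalues j * (w j) ^ 2 := by
    conv_lhs => rw [hsp]
    rw [Matrix.mul_assoc, ← Matrix.mulVec_mulVec, ← hback]
    have hdg : (Matrix.diagonal hH.eigenvalues * Uᵀ) *ᵥ v = Matrix.diagonal hH.eigenvalues *ᵥ w := by
      rw [← Matrix.mulVec_mulVec, ← hw]
    rw [hdg]
    simp [Matrix.mulVec_diagonal, dotProduct, pow_two]
    apply Finset.sum_congr rfl
    intro j _
    ring
  rw [hqv, hvv, dotProduct, Finset.mul_sum]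
  apply Finset.sum_le_sum
  intro j _
  have h2 : (0:ℝ) ≤ w j * w j := mul_self_nonneg _
  calc c * (w j * w j) ≤ hH.eigenvalues j * (w j * w j) :=
        mul_le_mul_of_nonneg_right (hc j) h2
    _ = hH.eigenvalues j * (w j) ^ 2 := by ring

lemma aux_le_iInf_eig [Nonempty k] {H : Matrix k k ℝ} (hH : H.IsHermitian) {c : ℝ}
    (hq : ∀ v : k → ℝ, c * (v ⬝ᵥ v) ≤ v ⬝ᵥ (H *ᵥ v)) :
    c ≤ ⨅ j, hH.eigenvalues j := by
  refine le_ciInf fun j => ?_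
  set v : k → ℝ := ⇑(hH.eigenvectorBasis j) with hv
  have hmv : H *ᵥ v = hH.eigenvalues j • v := hH.mulVec_eigenvectorBasis j
  have hv0 : v ≠ 0 := by
    have hne := hH.eigenvectorBasis.orthonormal.ne_zero j
    intro h
    apply hne
    ext i
    exact congrFun h i
  have hpos : 0 < v ⬝ᵥ v := aux_dot_self_pos hv0
  have h1 := hq v
  rw [hmv, dotProduct_smul] at h1
  have h2 : c * (v ⬝ᵥ v) ≤ hH.eigenvalues j * (v ⬝ᵥ v) := by simpa using h1
  exact le_of_mul_le_mul_right h2 hpos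

lemma aux_trace_eq_sum_eig {H : Matrix k k ℝ} (hH : H.IsHermitian) :
    H.trace = ∑ j, hH.eigenvalues j := by
  conv_lhs => rw [hH.spectral_theorem]
  rw [Unitary.conjStarAlgAut_apply, Matrix.trace_mul_cycle]
  have h1 : (star (hH.eigenvectorUnitary : Matrix k k ℝ)) * (hH.eigenvectorUnitary : Matrix k k ℝ)
      = 1 := Matrix.mem_unitaryGroup_iff'.mp hH.eigenvectorUnitary.2
  rw [h1, Matrix.one_mul, Matrix.trace_diagonal]
  simp

end Spec

section Inv
variable {m k : Type*} [Fintype m] [Fintype k] [DecidableEq k] [DecidableEq m]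

lemma aux_posDef_of_inj (C : Matrix m k ℝ) (h : ∀ x, C *ᵥ x = 0 → x = 0) :
    (Cᵀ * C).PosDef := by
  refine Matrix.PosDef.of_dotProduct_mulVec_pos ?_ ?_
  · have := Matrix.isHermitian_conjTranspose_mul_self C
    rwa [Matrix.conjTranspose_eq_transpose_of_trivial] at this
  · intro x hx
    have hs : star x = x := by simp
    rw [hs, ← Matrix.mulVec_mulVec, Matrix.dotProduct_mulVec, ← Matrix.mulVec_transpose,
      Matrix.transpose_transpose]
    exact aux_dot_self_pos (fun hC => hx (h x hC))

lemma aux_inv_quad_lower (C : Matrix m k ℝ) (hX : (Cᵀ * C).PosDef) (u : k → ℝ) :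
    u ⬝ᵥ u ≤ (∑ x, ∑ y, (C x y) ^ 2) * (u ⬝ᵥ ((Cᵀ * C)⁻¹ *ᵥ u)) := by
  set X := Cᵀ * C with hXdef
  have hdet : IsUnit X.det := (Matrix.isUnit_iff_isUnit_det X).mp hX.isUnit
  set w : k → ℝ := X⁻¹ *ᵥ u with hw
  have hXw : X *ᵥ w = u := by
    rw [hw, Matrix.mulVec_mulVec, Matrix.mul_nonsing_inv _ hdet, Matrix.one_mulVec]
  -- u ⬝ᵥ (X⁻¹ *ᵥ u) = (C *ᵥ w) ⬝ᵥ (C *ᵥ w)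
  have hq : u ⬝ᵥ (X⁻¹ *ᵥ u) = (C *ᵥ w) ⬝ᵥ (C *ᵥ w) := by
    rw [← hw, ← hXw, dotProduct_comm, hXdef, ← Matrix.mulVec_mulVec,
      Matrix.dotProduct_mulVec, ← Matrix.mulVec_transpose, Matrix.transpose_transpose]
  -- u ⬝ᵥ u = (Cᵀ *ᵥ (C *ᵥ w)) ⬝ᵥ (Cᵀ *ᵥ (C *ᵥ w))
  have hu : u ⬝ᵥ u = (Cᵀ *ᵥ (C *ᵥ w)) ⬝ᵥ (Cᵀ *ᵥ (C *ᵥ w)) := by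
    rw [← hXw, hXdef, ← Matrix.mulVec_mulVec]
  rw [hq, hu]
  have hb := aux_frob_bound Cᵀ (C *ᵥ w)
  have hsw : (∑ x, ∑ y, (Cᵀ x y) ^ 2) = ∑ x, ∑ y, (C x y) ^ 2 := by
    rw [Finset.sum_comm]; rfl
  rw [hsw] at hb
  exact hb

end Inv

/-- `Z = Aᵀ S (Sᵀ A W Aᵀ S)⁻¹ Sᵀ A`. -/
noncomputable def Zmat {n q : ℕ} (A W : Matrix (Fin n) (Fin n) ℝ)
    (S : Matrix (Fin n) (Fin q) ℝ) : Matrix (Fin n) (Fin n) ℝ :=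
  Aᵀ * S * (Sᵀ * A * W * Aᵀ * S)⁻¹ * Sᵀ * A

/-- The concatenated matrix `𝐒 = [S_1, …, S_r]`, with columns indexed by `Σ i, Fin (q i)`. -/
def bigS {n r : ℕ} (q : Fin r → ℕ) (S : ∀ i, Matrix (Fin n) (Fin (q i)) ℝ) :
    Matrix (Fin n) ((i : Fin r) × Fin (q i)) ℝ :=
  Matrix.of fun x j => S j.1 x j.2

/-- The Frobenius norm of a real matrix. -/
noncomputable def frob {m k : Type*} [Fintype m] [Fintype k] (M : Matrix m k ℝ) : ℝ :=
  Real.sqrt (∑ x, ∑ y, (M x y) ^ 2)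

/-- The square root of a positive semidefinite matrix, as defined in the older Mathlib
(removed since). -/
noncomputable def Matrix.PosSemidef.sqrt {n : Type*} [Fintype n] [DecidableEq n]
    {A : Matrix n n ℝ} (hA : A.PosSemidef) : Matrix n n ℝ :=
  hA.1.eigenvectorUnitary.1 * diagonal ((↑) ∘ (√·) ∘ hA.1.eigenvalues) *
    (star hA.1.eigenvectorUnitary : Matrix n n ℝ)

lemma aux_sqrt_transpose {n : Type*} [Fintype n] [DecidableEq n]
    {A : Matrix n n ℝ} (hA : A.PosSemidef) : (hA.sqrt)ᵀ = hA.sqrt := by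
  simp [Matrix.PosSemidef.sqrt, Matrix.transpose_mul, Matrix.star_eq_conjTranspose,
    Matrix.conjTranspose_eq_transpose_of_trivial, Matrix.mul_assoc]

lemma aux_sqrt_mul_self {n : Type*} [Fintype n] [DecidableEq n]
    {A : Matrix n n ℝ} (hA : A.PosSemidef) : hA.sqrt * hA.sqrt = A := by
  have h1 : (star (hA.1.eigenvectorUnitary : Matrix n n ℝ)) * (hA.1.eigenvectorUnitary : Matrix n n ℝ)
      = 1 := Matrix.mem_unitaryGroup_iff'.mp hA.1.eigenvectorUnitary.2
  have hD : diagonal (((↑) ∘ (√·) ∘ hA.1.eigenvalues) : n → ℝ) *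
      diagonal (((↑) ∘ (√·) ∘ hA.1.eigenvalues) : n → ℝ) = diagonal hA.1.eigenvalues := by
    rw [diagonal_mul_diagonal]
    congr 1
    funext i
    simp [Real.mul_self_sqrt (hA.eigenvalues_nonneg i)]
  unfold Matrix.PosSemidef.sqrt
  rw [show ∀ U D V : Matrix n n ℝ, U * D * V * (U * D * V) = U * (D * (V * U) * D) * V by
    intro U D V; simp only [Matrix.mul_assoc]]
  rw [h1, Matrix.mul_one, hD]
  conv_rhs => rw [hA.1.spectral_theorem, Unitary.conjStarAlgAut_apply]
  rfl

lemma frob_sq {m k : Type*} [Fintype m] [Fintype k] (M : Matrix m k ℝ) :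
    frob M ^ 2 = ∑ x, ∑ y, (M x y) ^ 2 :=
  Real.sq_sqrt (Finset.sum_nonneg fun x _ => Finset.sum_nonneg fun y _ => sq_nonneg _)

theorem stmt17 {n r : ℕ} (hn : 0 < n) (A W : Matrix (Fin n) (Fin n) ℝ)
    (q : Fin r → ℕ) [Nonempty ((i : Fin r) × Fin (q i))]
    (S : ∀ i, Matrix (Fin n) (Fin (q i)) ℝ)
    (hA : IsUnit A.det) (hW : W.PosDef) (hS : ∀ i, (S i).rank = q i)
    -- complete discrete sampling: `𝐒` has full row rank
    (hfull : (bigS q S).rank = n)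
    (p : Fin r → ℝ)
    (hp : ∀ i, p i = frob (hW.posSemidef.sqrt * Aᵀ * S i) ^ 2 /
      frob (hW.posSemidef.sqrt * Aᵀ * bigS q S) ^ 2)
    (hM : (hW.posSemidef.sqrt * (∑ i, p i • Zmat A W (S i)) *
      hW.posSemidef.sqrt).IsHermitian)
    (hN : ((bigS q S)ᵀ * A * W * Aᵀ * bigS q S).IsHermitian) :
    1 - ⨅ j, hM.eigenvalues j ≤
      1 - (⨅ x, hN.eigenvalues x) / ((bigS q S)ᵀ * A * W * Aᵀ * bigS q S).trace ∧
    (n : ℝ) * (⨅ x, hN.eigenvalues x) ≤ ((bigS q S)ᵀ * A * W * Aᵀ * bigS q S).trace := by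
  classical
  have : Nonempty (Fin n) := ⟨⟨0, hn⟩⟩
  set sq := hW.posSemidef.sqrt with hsqdef
  have hsqH : sqᵀ = sq := by
    rw [← Matrix.conjTranspose_eq_transpose_of_trivial]
    exact aux_sqrt_transpose hW.posSemidef
  have hsqmul : sq * sq = W := aux_sqrt_mul_self hW.posSemidef
  set B := sq * Aᵀ * bigS q S with hBdef
  set N := (bigS q S)ᵀ * A * W * Aᵀ * bigS q S with hNdef
  set μ := ⨅ x, hN.eigenvalues x with hμdef
  -- N = Bᵀ * B
  have hNeq : N = Bᵀ * B := by
    rw [hNdef, hBdef, ← hsqmul]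
    simp [Matrix.transpose_mul, Matrix.transpose_transpose, hsqH, Matrix.mul_assoc]
  -- injectivity facts
  have hAmul : ∀ x : Fin n → ℝ, A *ᵥ x = 0 → x = 0 := by
    intro x hx
    have hinj := Matrix.mulVec_injective_iff_isUnit.mpr ((Matrix.isUnit_iff_isUnit_det A).mpr hA)
    have : A *ᵥ x = A *ᵥ 0 := by rwa [Matrix.mulVec_zero]
    exact hinj this
  have hAtmul : ∀ x : Fin n → ℝ, Aᵀ *ᵥ x = 0 → x = 0 := by
    intro x hx
    have hdet : IsUnit Aᵀ.det := by rwa [Matrix.det_transpose]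
    have hinj := Matrix.mulVec_injective_iff_isUnit.mpr ((Matrix.isUnit_iff_isUnit_det Aᵀ).mpr hdet)
    have : Aᵀ *ᵥ x = Aᵀ *ᵥ 0 := by rwa [Matrix.mulVec_zero]
    exact hinj this
  have hsqmulinj : ∀ x : Fin n → ℝ, sq *ᵥ x = 0 → x = 0 := by
    intro x hx
    have hdet : IsUnit sq.det := by
      have h2 : sq.det * sq.det = W.det := by rw [← Matrix.det_mul, hsqmul]
      have h3 : W.det ≠ 0 := ne_of_gt hW.det_pos
      have : sq.det ≠ 0 := fun h => h3 (by rw [← h2, h, mul_zero])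
      exact this.isUnit
    have hinj := Matrix.mulVec_injective_iff_isUnit.mpr ((Matrix.isUnit_iff_isUnit_det sq).mpr hdet)
    have : sq *ᵥ x = sq *ᵥ 0 := by rwa [Matrix.mulVec_zero]
    exact hinj this
  have hCiinj : ∀ i (x : Fin (q i) → ℝ), (sq * Aᵀ * S i) *ᵥ x = 0 → x = 0 := by
    intro i x hx
    rw [← Matrix.mulVec_mulVec, ← Matrix.mulVec_mulVec] at hx
    exact aux_mulVec_inj_of_rank (by simpa using hS i) x (hAtmul _ (hsqmulinj _ hx))
  have hBtinj : ∀ x : Fin n → ℝ, Bᵀ *ᵥ x = 0 → x = 0 := by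
    intro x hx
    have hBt : Bᵀ = (bigS q S)ᵀ * (A * sq) := by
      rw [hBdef]
      simp [Matrix.transpose_mul, Matrix.transpose_transpose, hsqH, Matrix.mul_assoc]
    rw [hBt, ← Matrix.mulVec_mulVec, ← Matrix.mulVec_mulVec] at hx
    have hrk : ((bigS q S)ᵀ).rank = Fintype.card (Fin n) := by
      rw [Matrix.rank_transpose, hfull, Fintype.card_fin]
    exact hsqmulinj _ (hAmul _ (aux_mulVec_inj_of_rank hrk _ hx))
  -- Xi posdef
  have hXieq : ∀ i, (S i)ᵀ * A * W * Aᵀ * S i = (sq * Aᵀ * S i)ᵀ * (sq * Aᵀ * S i) := by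
    intro i
    rw [← hsqmul]
    simp [Matrix.transpose_mul, Matrix.transpose_transpose, hsqH, Matrix.mul_assoc]
  have hXiPD : ∀ i, ((sq * Aᵀ * S i)ᵀ * (sq * Aᵀ * S i)).PosDef :=
    fun i => aux_posDef_of_inj _ (hCiinj i)
  -- T > 0
  set T := ∑ x, ∑ c, (B x c) ^ 2 with hTdef
  have hTnn : 0 ≤ T := Finset.sum_nonneg fun x _ => Finset.sum_nonneg fun y _ => sq_nonneg _
  have hTpos : 0 < T := by
    rcases lt_or_eq_of_le hTnn with h | h
    · exact h
    · exfalso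
      have hB0 : B = 0 := by
        ext x c
        have h1 := (Finset.sum_eq_zero_iff_of_nonneg
          (fun x _ => Finset.sum_nonneg fun y _ => sq_nonneg (B x y))).mp h.symm x (Finset.mem_univ x)
        have h2 := (Finset.sum_eq_zero_iff_of_nonneg
          (fun y _ => sq_nonneg (B x y))).mp h1 c (Finset.mem_univ c)
        exact pow_eq_zero_iff (two_ne_zero) |>.mp h2
      have := hBtinj (fun _ => 1) (by rw [hB0]; simp)
      exact one_ne_zero (congrFun this ⟨0, hn⟩)
  -- trace N = T
  have hTrace : N.trace = T := by
    rw [hNeq, hTdef]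
    rw [Matrix.trace]
    simp only [Matrix.diag, Matrix.mul_apply, Matrix.transpose_apply, pow_two]
    rw [Finset.sum_comm]
  -- G = B * Bᵀ
  set G := B * Bᵀ with hGdef
  have hG : G.IsHermitian := by
    have h := Matrix.isHermitian_mul_conjTranspose_self B
    rwa [Matrix.conjTranspose_eq_transpose_of_trivial] at h
  have hμle : ∀ x, μ ≤ hN.eigenvalues x := fun x => ciInf_le (Finite.bddBelow_range _) x
  have hGj : ∀ j, μ ≤ hG.eigenvalues j := by
    intro j
    set x : Fin n → ℝ := ⇑(hG.eigenvectorBasis j) with hx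
    have hmv : G *ᵥ x = hG.eigenvalues j • x := hG.mulVec_eigenvectorBasis j
    have hx0 : x ≠ 0 := by
      have hne := hG.eigenvectorBasis.orthonormal.ne_zero j
      intro h; apply hne; ext i; exact congrFun h i
    set w : ((i : Fin r) × Fin (q i)) → ℝ := Bᵀ *ᵥ x with hw
    have hw0 : w ≠ 0 := fun h => hx0 (hBtinj x h)
    have hNw : N *ᵥ w = hG.eigenvalues j • w := by
      have h2 : B *ᵥ (Bᵀ *ᵥ x) = G *ᵥ x := by rw [Matrix.mulVec_mulVec]
      rw [hNeq, hw, ← Matrix.mulVec_mulVec, h2, hmv, Matrix.mulVec_smul]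
    have h1 := aux_quad_lower hN hμle w
    rw [hNw, dotProduct_smul, smul_eq_mul] at h1
    exact le_of_mul_le_mul_right h1 (aux_dot_self_pos hw0)
  -- quadratic form bound for M
  have hquad : ∀ v : Fin n → ℝ, (μ / T) * (v ⬝ᵥ v) ≤
      v ⬝ᵥ ((sq * (∑ i, p i • Zmat A W (S i)) * sq) *ᵥ v) := by
    intro v
    have hMsum : sq * (∑ i, p i • Zmat A W (S i)) * sq
        = ∑ i, p i • ((sq * Aᵀ * S i) * (((sq * Aᵀ * S i)ᵀ * (sq * Aᵀ * S i))⁻¹)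
            * (sq * Aᵀ * S i)ᵀ) := by
      rw [Matrix.mul_sum, Finset.sum_mul]
      apply Finset.sum_congr rfl
      intro i _
      rw [mul_smul_comm, smul_mul_assoc]
      congr 1
      rw [Zmat, hXieq i]
      simp [Matrix.transpose_mul, Matrix.transpose_transpose, hsqH, Matrix.mul_assoc]
    set u : ∀ i, Fin (q i) → ℝ := fun i => (sq * Aᵀ * S i)ᵀ *ᵥ v with hu
    have hterm : ∀ i, v ⬝ᵥ ((p i • ((sq * Aᵀ * S i) * (((sq * Aᵀ * S i)ᵀ * (sq * Aᵀ * S i))⁻¹)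
            * (sq * Aᵀ * S i)ᵀ)) *ᵥ v)
        = p i * (u i ⬝ᵥ ((((sq * Aᵀ * S i)ᵀ * (sq * Aᵀ * S i))⁻¹) *ᵥ u i)) := by
      intro i
      rw [Matrix.smul_mulVec, dotProduct_smul, smul_eq_mul]
      congr 1
      rw [← Matrix.mulVec_mulVec, ← Matrix.mulVec_mulVec, Matrix.dotProduct_mulVec,
        ← Matrix.mulVec_transpose]
    have hexp : v ⬝ᵥ ((sq * (∑ i, p i • Zmat A W (S i)) * sq) *ᵥ v)
        = ∑ i, p i * (u i ⬝ᵥ ((((sq * Aᵀ * S i)ᵀ * (sq * Aᵀ * S i))⁻¹) *ᵥ u i)) := by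
      rw [hMsum, aux_sum_mulVec, aux_dotProduct_sum]
      exact Finset.sum_congr rfl fun i _ => hterm i
    -- entries of B restricted to block i
    have hBentry : ∀ (x : Fin n) (i : Fin r) (j : Fin (q i)),
        B x ⟨i, j⟩ = (sq * Aᵀ * S i) x j := by
      intro x i j
      rw [hBdef]
      simp [Matrix.mul_apply, bigS]
    have hBv : ∀ (i : Fin r) (j : Fin (q i)), (Bᵀ *ᵥ v) ⟨i, j⟩ = u i j := by
      intro i j
      simp only [Matrix.mulVec, dotProduct, Matrix.transpose_apply, hu]
      exact Finset.sum_congr rfl fun x _ => by rw [hBentry]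
    have hsplit : v ⬝ᵥ (G *ᵥ v) = ∑ i, (u i ⬝ᵥ u i) := by
      rw [hGdef, ← Matrix.mulVec_mulVec, Matrix.dotProduct_mulVec, ← Matrix.mulVec_transpose]
      rw [dotProduct, ← Finset.univ_sigma_univ, Finset.sum_sigma]
      exact Finset.sum_congr rfl fun i _ => Finset.sum_congr rfl fun j _ => by
        rw [dotProduct] at *
        rw [hBv]
    have hGv := aux_quad_lower hG hGj v
    have hTle : ∀ i, (u i ⬝ᵥ u i) / T
        ≤ p i * (u i ⬝ᵥ ((((sq * Aᵀ * S i)ᵀ * (sq * Aᵀ * S i))⁻¹) *ᵥ u i)) := by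
      intro i
      have hinv := aux_inv_quad_lower (sq * Aᵀ * S i) (hXiPD i) (u i)
      have hpi : p i = (∑ x, ∑ y, ((sq * Aᵀ * S i) x y) ^ 2) / T := by
        rw [hp i, frob_sq, frob_sq, hBdef, hTdef]
      rw [hpi, div_mul_eq_mul_div]
      exact (div_le_div_iff_of_pos_right hTpos).mpr hinv
    calc (μ / T) * (v ⬝ᵥ v) = (μ * (v ⬝ᵥ v)) / T := by ring
      _ ≤ (v ⬝ᵥ (G *ᵥ v)) / T := (div_le_div_iff_of_pos_right hTpos).mpr hGv
      _ = ∑ i, (u i ⬝ᵥ u i) / T := by rw [hsplit, Finset.sum_div]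
      _ ≤ ∑ i, p i * (u i ⬝ᵥ ((((sq * Aᵀ * S i)ᵀ * (sq * Aᵀ * S i))⁻¹) *ᵥ u i)) :=
          Finset.sum_le_sum fun i _ => hTle i
      _ = v ⬝ᵥ ((sq * (∑ i, p i • Zmat A W (S i)) * sq) *ᵥ v) := hexp.symm
  have hfin : μ / T ≤ ⨅ j, hM.eigenvalues j := aux_le_iInf_eig hM hquad
  have hNpsd : N.PosSemidef := by
    rw [hNeq]
    have h := Matrix.posSemidef_conjTranspose_mul_self B
    rwa [Matrix.conjTranspose_eq_transpose_of_trivial] at h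
  have hEnn : ∀ x, 0 ≤ hN.eigenvalues x := fun x => hNpsd.eigenvalues_nonneg x
  have hμnn : 0 ≤ μ := le_ciInf hEnn
  constructor
  · rw [hTrace]
    exact sub_le_sub_left hfin 1
  · have hcard : (n : ℝ) ≤ (Fintype.card ((i : Fin r) × Fin (q i)) : ℝ) := by
      have h := Matrix.rank_le_card_width (bigS q S)
      rw [hfull] at h
      exact_mod_cast h
    calc (n : ℝ) * μ ≤ (Fintype.card ((i : Fin r) × Fin (q i)) : ℝ) * μ :=
          mul_le_mul_of_nonneg_right hcard hμnn
      _ ≤ ∑ x, hN.eigenvalues x := by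
          have h := Finset.card_nsmul_le_sum Finset.univ hN.eigenvalues μ
            (fun x _ => hμle x)
          simpa [nsmul_eq_mul, Finset.card_univ] using h
      _ = N.trace := (aux_trace_eq_sum_eig hN).symm
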